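/- For the irreducible graded sl2-representation V_λ^w (highest weight λ, highest weight vector of parity w), the dual representation (V_λ^w)^* is isomorphic as a graded sl2-representation to V_λ^{w+λ}. -/

import Mathlib

variable {K V : Type*} [Field K] [AddCommGroup V] [Module K V]

/-- An sl2-triple of linear endomorphisms: [h,e]=2e, [h,f]=-2f, [e,f]=h. -/
def Sl2Rel (e h f : Module.End K V) : Prop :=
  h * e - e * h = 2 • e ∧ h * f - f * h = -(2 • f) ∧ e * f - f * e = h

/-- A submodule invariant under the sl2-action. -/
def Sl2Inv (e h f : Module.End K V) (W : Submodule K V) : Prop :=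
  (∀ x ∈ W, e x ∈ W) ∧ (∀ x ∈ W, h x ∈ W) ∧ (∀ x ∈ W, f x ∈ W)

/-- A Z/2Z-grading V = V0 ⊕ V1 compatible with the graded sl2 (h even, e and f odd). -/
def Sl2Grading (e h f : Module.End K V) (V0 V1 : Submodule K V) : Prop :=
  IsCompl V0 V1 ∧ (∀ x ∈ V0, h x ∈ V0) ∧ (∀ x ∈ V1, h x ∈ V1) ∧
    (∀ x ∈ V0, e x ∈ V1) ∧ (∀ x ∈ V1, e x ∈ V0) ∧
    (∀ x ∈ V0, f x ∈ V1) ∧ (∀ x ∈ V1, f x ∈ V0)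

/-- A submodule which is graded with respect to the grading (V0, V1). -/
def Sl2GradedSub (V0 V1 W : Submodule K V) : Prop :=
  W = (W ⊓ V0) ⊔ (W ⊓ V1)

/-! ### Auxiliary lemmas -/

lemma stmt10_castsub_ne [CharZero K] (k lam : ℕ) (hk : k < lam) : ((lam:K) - k) ≠ 0 := by
  intro hz
  exact absurd (Nat.cast_injective (sub_eq_zero.mp hz)) (by omega)

lemma stmt10_hf (e h f : Module.End K V) (hrel : Sl2Rel e h f)
    (lam : ℕ) (v : V) (hvh : h v = (lam : K) • v) :
    ∀ k : ℕ, h ((f ^ k) v) = ((lam : K) - 2 * k) • (f ^ k) v := by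
  have hc : ∀ x, h (f x) = f (h x) - (2:K) • f x := by
    intro x
    have := congrArg (fun g : Module.End K V => g x) hrel.2.1
    simp only [LinearMap.sub_apply, Module.End.mul_apply, LinearMap.neg_apply,
      LinearMap.smul_apply] at this
    simp only [two_smul] at this
    linear_combination (norm := module) this
  intro k
  induction k with
  | zero => simpa using hvh
  | succ k ih =>
    rw [pow_succ' f k]
    simp only [Module.End.mul_apply]
    rw [hc, ih, map_smul]
    push_cast
    module

lemma stmt10_ef (e h f : Module.End K V) (hrel : Sl2Rel e h f)
    (lam : ℕ) (v : V) (hve : e v = 0) (hvh : h v = (lam : K) • v) :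
    ∀ k : ℕ, e ((f ^ (k+1)) v) = (((k:K)+1) * ((lam : K) - k)) • (f ^ k) v := by
  have hc : ∀ x, e (f x) = f (e x) + h x := by
    intro x
    have := congrArg (fun g : Module.End K V => g x) hrel.2.2
    simp only [LinearMap.sub_apply, Module.End.mul_apply] at this
    linear_combination (norm := module) this
  intro k
  induction k with
  | zero => simp [pow_succ', hc, hve, hvh]
  | succ k ih =>
    rw [pow_succ' f (k+1)]
    simp only [Module.End.mul_apply]
    rw [hc, ih, map_smul, ← Module.End.mul_apply f, ← pow_succ' f k,
      stmt10_hf e h f hrel lam v hvh (k+1)]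
    push_cast
    module

lemma stmt10_ne [CharZero K] (e h f : Module.End K V) (lam : ℕ) (v : V) (hv : v ≠ 0)
    (hef : ∀ k : ℕ, e ((f ^ (k+1)) v) = (((k:K)+1) * ((lam : K) - k)) • (f ^ k) v) :
    ∀ k ≤ lam, (f ^ k) v ≠ 0 := by
  intro k
  induction k with
  | zero => simpa using hv
  | succ k ih =>
    intro hk hz
    have h1 := hef k
    rw [hz, map_zero] at h1
    have hc : (((k:K)+1) * ((lam : K) - k)) ≠ 0 :=
      mul_ne_zero (Nat.cast_add_one_ne_zero k) (stmt10_castsub_ne k lam (by omega))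
    exact ih (by omega) ((smul_eq_zero.mp h1.symm).resolve_left hc)

lemma stmt10_exzero [CharZero K] [FiniteDimensional K V] (h f : Module.End K V)
    (lam : ℕ) (v : V)
    (hhf : ∀ k : ℕ, h ((f ^ k) v) = ((lam : K) - 2 * k) • (f ^ k) v) :
    ∃ m : ℕ, (f ^ m) v = 0 := by
  by_contra hno
  push_neg at hno
  set n := Module.finrank K V with hn
  have li : LinearIndependent K (fun i : Fin (n+1) => (f ^ (i:ℕ)) v) := by
    apply h.eigenvectors_linearIndependent' (fun i : Fin (n+1) => (lam:K) - 2 * (i:ℕ))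
    · intro i j hij
      simp only at hij
      have h2 : (2:K) * (i:ℕ) = 2 * (j:ℕ) := by linear_combination -hij
      exact Fin.ext (Nat.cast_injective (mul_left_cancel₀ two_ne_zero h2))
    · intro i
      exact ⟨Module.End.mem_eigenspace_iff.2 (hhf i), hno i⟩
  have := li.fintype_card_le_finrank
  simp [hn] at this

/-- the top power vanishes -/
lemma stmt10_top_zero [CharZero K] [FiniteDimensional K V]
    (e h f : Module.End K V) (lam : ℕ) (v : V) (hv : v ≠ 0)
    (hhf : ∀ k : ℕ, h ((f ^ k) v) = ((lam : K) - 2 * k) • (f ^ k) v)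
    (hef : ∀ k : ℕ, e ((f ^ (k+1)) v) = (((k:K)+1) * ((lam : K) - k)) • (f ^ k) v) :
    (f ^ (lam + 1)) v = 0 := by
  obtain ⟨m, hm⟩ := stmt10_exzero h f lam v hhf
  have hmem : ∃ m : ℕ, (f ^ m) v = 0 := ⟨m, hm⟩
  classical
  set m₀ := Nat.find hmem with hm₀
  have hz : (f ^ m₀) v = 0 := Nat.find_spec hmem
  have hmin : ∀ j < m₀, (f ^ j) v ≠ 0 := fun j hj => Nat.find_min hmem hj
  have hm0 : m₀ ≠ 0 := by
    intro h0
    rw [h0] at hz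
    simpa using absurd hz hv
  obtain ⟨k, hk1⟩ : ∃ k, m₀ = k + 1 := ⟨m₀ - 1, by omega⟩
  rw [hk1] at hz hmin
  have h1 := hef k
  rw [hz, map_zero] at h1
  have hk : (f ^ k) v ≠ 0 := hmin k (by omega)
  have hc0 : (((k:K)+1) * ((lam : K) - k)) = 0 := by
    by_contra hc
    exact hk ((smul_eq_zero.mp h1.symm).resolve_left hc)
  have : (lam : K) = (k : K) := by
    rcases mul_eq_zero.mp hc0 with h' | h'
    · exact absurd h' (Nat.cast_add_one_ne_zero k)
    · exact sub_eq_zero.mp h'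
  have : lam = k := Nat.cast_injective this
  rw [this]
  exact hz

lemma stmt10_zmod2 (a : ZMod 2) : a = 0 ∨ a = 1 := by revert a; decide

/-- The dual of the irreducible graded sl2-representation V_λ^w, with the
contragredient action and the induced grading, is isomorphic as a graded representation
to V_λ^{w+λ}: i.e. it is an irreducible graded representation possessing a highest weight
vector of weight λ and of parity w + λ. -/
theorem stmt10 {K V : Type*} [Field K] [CharZero K] [AddCommGroup V] [Module K V]
    [FiniteDimensional K V] [Nontrivial V]
    (e h f : Module.End K V) (hrel : Sl2Rel e h f)
    (V0 V1 : Submodule K V) (hgr : Sl2Grading e h f V0 V1)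
    (hirr : ∀ W : Submodule K V, Sl2Inv e h f W → W = ⊥ ∨ W = ⊤)
    (lam : ℕ) (w : ZMod 2)
    (v : V) (hv : v ≠ 0) (hve : e v = 0) (hvh : h v = (lam : K) • v)
    (hvpar : if w = 0 then v ∈ V0 else v ∈ V1)
    -- the contragredient action on the dual space
    (eD hD fD : Module.End K (Module.Dual K V))
    (heD : ∀ (φ : Module.Dual K V) (x : V), eD φ x = -φ (e x))
    (hhD : ∀ (φ : Module.Dual K V) (x : V), hD φ x = -φ (h x))
    (hfD : ∀ (φ : Module.Dual K V) (x : V), fD φ x = -φ (f x))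
    -- the induced grading on the dual space
    (D0 D1 : Submodule K (Module.Dual K V))
    (hD0 : ∀ φ : Module.Dual K V, φ ∈ D0 ↔ ∀ x ∈ V1, φ x = 0)
    (hD1 : ∀ φ : Module.Dual K V, φ ∈ D1 ↔ ∀ x ∈ V0, φ x = 0) :
    Sl2Rel eD hD fD ∧ Sl2Grading eD hD fD D0 D1 ∧
    (∀ W : Submodule K (Module.Dual K V), Sl2Inv eD hD fD W → W = ⊥ ∨ W = ⊤) ∧
    ∃ φ : Module.Dual K V, φ ≠ 0 ∧ eD φ = 0 ∧ hD φ = (lam : K) • φ ∧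
      (if w + (lam : ZMod 2) = 0 then φ ∈ D0 else φ ∈ D1) := by
  classical
  obtain ⟨hre, hrf, href⟩ := hrel
  have hrel' : Sl2Rel e h f := ⟨hre, hrf, href⟩
  obtain ⟨hc, hh0, hh1, he0, he1, hf0, hf1⟩ := hgr
  -- projections onto the graded pieces
  set P0 : V →ₗ[K] V := V0.subtype ∘ₗ V0.projectionOnto V1 hc with hP0def
  set P1 : V →ₗ[K] V := V1.subtype ∘ₗ V1.projectionOnto V0 hc.symm with hP1def
  have hP0mem : ∀ x, P0 x ∈ V0 := fun x => (V0.projectionOnto V1 hc x).2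
  have hP1mem : ∀ x, P1 x ∈ V1 := fun x => (V1.projectionOnto V0 hc.symm x).2
  have hPsum : ∀ x, P0 x + P1 x = x := fun x =>
    Submodule.projection_add_projection_eq_self hc x
  have hP0V0 : ∀ x ∈ V0, P0 x = x := fun x hx => by
    exact congrArg V0.subtype (Submodule.projectionOnto_apply_left hc ⟨x, hx⟩)
  have hP0V1 : ∀ x ∈ V1, P0 x = 0 := fun x hx => by
    simp [hP0def, Submodule.projectionOnto_apply_of_mem_right hc hx]
  have hP1V1 : ∀ x ∈ V1, P1 x = x := fun x hx => by
    exact congrArg V1.subtype (Submodule.projectionOnto_apply_left hc.symm ⟨x, hx⟩)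
  have hP1V0 : ∀ x ∈ V0, P1 x = 0 := fun x hx => by
    simp [hP1def, Submodule.projectionOnto_apply_of_mem_right hc.symm hx]
  -- Part 1 : the sl2-relations on the dual
  have part1 : Sl2Rel eD hD fD := by
    refine ⟨?_, ?_, ?_⟩
    · refine LinearMap.ext fun φ => LinearMap.ext fun x => ?_
      have key := congrArg (fun g : Module.End K V => φ (g x)) hre
      simp only [LinearMap.sub_apply, Module.End.mul_apply, LinearMap.smul_apply, map_sub,
        map_nsmul] at key
      simp only [LinearMap.sub_apply, Module.End.mul_apply, LinearMap.smul_apply, hhD, heD]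
      simp only [two_smul] at key ⊢
      linear_combination -key
    · refine LinearMap.ext fun φ => LinearMap.ext fun x => ?_
      have key := congrArg (fun g : Module.End K V => φ (g x)) hrf
      simp only [LinearMap.sub_apply, Module.End.mul_apply, LinearMap.smul_apply, map_sub,
        map_nsmul, LinearMap.neg_apply, map_neg] at key
      simp only [LinearMap.sub_apply, Module.End.mul_apply, LinearMap.smul_apply,
        LinearMap.neg_apply, hhD, hfD]
      simp only [two_smul] at key ⊢
      linear_combination -key
    · refine LinearMap.ext fun φ => LinearMap.ext fun x => ?_
      have key := congrArg (fun g : Module.End K V => φ (g x)) href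
      simp only [LinearMap.sub_apply, Module.End.mul_apply, map_sub] at key
      simp only [LinearMap.sub_apply, Module.End.mul_apply, heD, hfD, hhD]
      linear_combination -key
  -- Part 2 : the grading on the dual
  have part2 : Sl2Grading eD hD fD D0 D1 := by
    refine ⟨⟨?_, ?_⟩, ?_, ?_, ?_, ?_, ?_, ?_⟩
    · rw [Submodule.disjoint_def]
      intro φ h0 h1
      refine LinearMap.ext fun x => ?_
      have := congrArg φ (hPsum x)
      rw [map_add, (hD0 φ).1 h0 _ (hP1mem x), (hD1 φ).1 h1 _ (hP0mem x)] at this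
      simpa using this.symm
    · rw [codisjoint_iff]
      refine le_antisymm le_top ?_
      intro φ _
      refine Submodule.mem_sup.2 ⟨φ ∘ₗ P0, ?_, φ ∘ₗ P1, ?_, ?_⟩
      · exact (hD0 _).2 fun x hx => by simp [hP0V1 x hx]
      · exact (hD1 _).2 fun x hx => by simp [hP1V0 x hx]
      · refine LinearMap.ext fun x => ?_
        simp only [LinearMap.add_apply, LinearMap.comp_apply]
        rw [← map_add, hPsum]
    · intro φ hφ
      exact (hD0 _).2 fun x hx => by rw [hhD, (hD0 φ).1 hφ _ (hh1 x hx), neg_zero]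
    · intro φ hφ
      exact (hD1 _).2 fun x hx => by rw [hhD, (hD1 φ).1 hφ _ (hh0 x hx), neg_zero]
    · intro φ hφ
      exact (hD1 _).2 fun x hx => by rw [heD, (hD0 φ).1 hφ _ (he0 x hx), neg_zero]
    · intro φ hφ
      exact (hD0 _).2 fun x hx => by rw [heD, (hD1 φ).1 hφ _ (he1 x hx), neg_zero]
    · intro φ hφ
      exact (hD1 _).2 fun x hx => by rw [hfD, (hD0 φ).1 hφ _ (hf0 x hx), neg_zero]
    · intro φ hφ
      exact (hD0 _).2 fun x hx => by rw [hfD, (hD1 φ).1 hφ _ (hf1 x hx), neg_zero]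
  -- Part 3 : irreducibility of the dual
  have part3 : ∀ W : Submodule K (Module.Dual K V), Sl2Inv eD hD fD W → W = ⊥ ∨ W = ⊤ := by
    intro W hW
    have hinv : Sl2Inv e h f W.dualCoannihilator := by
      refine ⟨?_, ?_, ?_⟩ <;>
        · intro x hx
          rw [Submodule.mem_dualCoannihilator] at hx ⊢
          intro φ hφ
          first
          | · have hz := hx _ (hW.1 φ hφ)
              rw [heD] at hz
              exact neg_eq_zero.mp hz
          | · have hz := hx _ (hW.2.1 φ hφ)
              rw [hhD] at hz
              exact neg_eq_zero.mp hz
          | · have hz := hx _ (hW.2.2 φ hφ)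
              rw [hfD] at hz
              exact neg_eq_zero.mp hz
    rcases hirr _ hinv with hbot | htop
    · right
      have := Subspace.dualCoannihilator_dualAnnihilator_eq (W := W)
      rw [hbot, Submodule.dualAnnihilator_bot] at this
      exact this.symm
    · left
      rw [eq_bot_iff]
      intro φ hφ
      have : ∀ x : V, φ x = 0 := fun x =>
        (Submodule.mem_dualCoannihilator x).1 (htop ▸ Submodule.mem_top) φ hφ
      exact (Submodule.mem_bot K).2 (LinearMap.ext this)
  -- Part 4 : the highest weight vector of the dual
  have hhf := stmt10_hf e h f hrel' lam v hvh
  have hef := stmt10_ef e h f hrel' lam v hve hvh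
  have hne := stmt10_ne e h f lam v hv hef
  have htz := stmt10_top_zero e h f lam v hv hhf hef
  -- parity of the vectors f^k v
  have hpar : ∀ k : ℕ, (w + (k : ZMod 2) = 0 ∧ (f ^ k) v ∈ V0) ∨
      (w + (k : ZMod 2) = 1 ∧ (f ^ k) v ∈ V1) := by
    intro k
    induction k with
    | zero =>
      rcases stmt10_zmod2 w with h0 | h1
      · left
        refine ⟨by simp [h0], ?_⟩
        simp only [h0, if_pos] at hvpar
        simpa using hvpar
      · right
        refine ⟨by simp [h1], ?_⟩
        rw [h1, if_neg (by decide)] at hvpar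
        simpa using hvpar
    | succ k ih =>
      have hcast : ((k+1 : ℕ) : ZMod 2) = (k : ZMod 2) + 1 := by push_cast; ring
      have hpow : (f ^ (k+1)) v = f ((f ^ k) v) := by
        rw [pow_succ' f k]; rfl
      rcases ih with ⟨hp, hm⟩ | ⟨hp, hm⟩
      · right
        constructor
        · rw [hcast, ← add_assoc, hp, zero_add]
        · rw [hpow]; exact hf0 _ hm
      · left
        constructor
        · rw [hcast, ← add_assoc, hp]; decide
        · rw [hpow]; exact hf1 _ hm
  -- the basis f^k v, k = 0 .. lam
  have li : LinearIndependent K (fun i : Fin (lam+1) => (f ^ (i:ℕ)) v) := by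
    apply h.eigenvectors_linearIndependent' (fun i : Fin (lam+1) => (lam:K) - 2*(i:ℕ))
    · intro i j hij
      simp only at hij
      have h2 : (2:K) * (i:ℕ) = 2 * (j:ℕ) := by linear_combination -hij
      exact Fin.ext (Nat.cast_injective (mul_left_cancel₀ two_ne_zero h2))
    · intro i
      exact ⟨Module.End.mem_eigenspace_iff.2 (hhf i), hne i (Nat.lt_succ_iff.mp i.isLt)⟩
  have hspan : Submodule.span K (Set.range (fun i : Fin (lam+1) => (f ^ (i:ℕ)) v)) = ⊤ := by
    set W := Submodule.span K (Set.range fun i : Fin (lam+1) => (f ^ (i:ℕ)) v) with hWdef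
    have hmemW : ∀ k ≤ lam, (f ^ k) v ∈ W := fun k hk =>
      Submodule.subset_span ⟨⟨k, by omega⟩, rfl⟩
    have hstep : ∀ g : Module.End K V,
        (∀ i : Fin (lam+1), g ((f ^ (i:ℕ)) v) ∈ W) → ∀ x ∈ W, g x ∈ W := by
      intro g hg x hx
      have hle : W ≤ Submodule.comap g W := by
        rw [hWdef]
        apply Submodule.span_le.2
        rintro _ ⟨i, rfl⟩
        exact hg i
      exact hle hx
    have hinv : Sl2Inv e h f W := by
      refine ⟨hstep e ?_, hstep h ?_, hstep f ?_⟩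
      · intro i
        have hlt := i.isLt
        cases hik : (i : ℕ) with
        | zero => simpa [hve] using W.zero_mem
        | succ k =>
          rw [hik] at hlt
          rw [hef k]
          exact W.smul_mem _ (hmemW k (by omega))
      · intro i
        rw [hhf i]
        exact W.smul_mem _ (Submodule.subset_span (Set.mem_range_self i))
      · intro i
        have hlt := i.isLt
        by_cases hik : (i:ℕ) = lam
        · rw [hik, ← Module.End.mul_apply f, ← pow_succ' f lam, htz]
          exact W.zero_mem
        · rw [← Module.End.mul_apply f, ← pow_succ' f (i:ℕ)]
          exact hmemW _ (by omega)
    rcases hirr W hinv with hbot | htop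
    · exfalso
      have hvW : v ∈ W := by simpa using hmemW 0 (Nat.zero_le _)
      rw [hbot, Submodule.mem_bot] at hvW
      exact hv hvW
    · exact htop
  set B : Module.Basis (Fin (lam+1)) K V := Module.Basis.mk li hspan.ge with hBdef
  have hBi : ∀ i : Fin (lam+1), B i = (f ^ (i:ℕ)) v := fun i => Module.Basis.mk_apply li hspan.ge i
  set φ : Module.Dual K V := B.coord (Fin.last lam) with hφdef
  have hφB : ∀ i, φ (B i) = if i = Fin.last lam then 1 else 0 := by
    intro i
    rw [hφdef, Module.Basis.coord_apply, B.repr_self, Finsupp.single_apply]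
  have hφfk : ∀ i : Fin (lam+1), φ ((f ^ (i:ℕ)) v) = if (i:ℕ) = lam then 1 else 0 := by
    intro i
    rw [← hBi i, hφB i]
    by_cases hil : (i:ℕ) = lam
    · rw [if_pos hil, if_pos (Fin.ext (by simp [hil]))]
    · rw [if_neg hil, if_neg (fun hl => hil (by rw [hl]; simp))]
  refine ⟨part1, part2, part3, φ, ?_, ?_, ?_, ?_⟩
  · intro h0
    have := hφfk (Fin.last lam)
    rw [h0] at this
    simp at this
  · refine B.ext fun i => ?_
    rw [LinearMap.zero_apply, heD, hBi]
    have hlt := i.isLt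
    cases hik : (i : ℕ) with
    | zero => simp [hve]
    | succ k =>
      rw [hik] at hlt
      rw [hef k, map_smul]
      have : φ ((f ^ k) v) = 0 := by
        have := hφfk ⟨k, by omega⟩
        rwa [if_neg (by simp; omega)] at this
      rw [this, smul_zero, neg_zero]
  · refine B.ext fun i => ?_
    rw [LinearMap.smul_apply, hhD, hBi, hhf i, map_smul]
    have hlt := i.isLt
    by_cases hil : (i:ℕ) = lam
    · rw [hφfk i, if_pos hil, hil]
      simp only [smul_eq_mul, mul_one]
      ring
    · rw [hφfk i, if_neg hil]
      simp
  · rcases stmt10_zmod2 (w + (lam : ZMod 2)) with h0 | h1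
    · rw [if_pos h0]
      refine (hD0 φ).2 fun x hx => ?_
      have hψ : φ ∘ₗ P1 = 0 := by
        refine B.ext fun i => ?_
        rw [LinearMap.zero_apply, LinearMap.comp_apply, hBi]
        rcases hpar i with ⟨hp, hm⟩ | ⟨hp, hm⟩
        · rw [hP1V0 _ hm, map_zero]
        · rw [hP1V1 _ hm]
          have hil : (i:ℕ) ≠ lam := by
            intro hil
            rw [hil, h0] at hp
            exact absurd hp (by decide)
          rw [hφfk i, if_neg hil]
      calc φ x = φ (P1 x) := by rw [hP1V1 x hx]
        _ = (φ ∘ₗ P1) x := rfl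
        _ = 0 := by rw [hψ]; rfl
    · rw [if_neg (by rw [h1]; decide)]
      refine (hD1 φ).2 fun x hx => ?_
      have hψ : φ ∘ₗ P0 = 0 := by
        refine B.ext fun i => ?_
        rw [LinearMap.zero_apply, LinearMap.comp_apply, hBi]
        rcases hpar i with ⟨hp, hm⟩ | ⟨hp, hm⟩
        · rw [hP0V0 _ hm]
          have hil : (i:ℕ) ≠ lam := by
            intro hil
            rw [hil, h1] at hp
            exact absurd hp (by decide)
          rw [hφfk i, if_neg hil]
        · rw [hP0V1 _ hm, map_zero]
      calc φ x = φ (P0 x) := by rw [hP0V0 x hx]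
        _ = (φ ∘ₗ P0) x := rfl
        _ = 0 := by rw [hψ]; rfl
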